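/- Fix constants β ∈ (0, 1/2), γ ∈ (0, 1−2β), c > 0, k ∈ ℕ and C > 0. For each n, let F_0, F_1, …, F_{N−1} be pairwise disjoint nonempty subsets of {1,…,n} with N ≤ C·n^γ and |F_h| ≤ C·n^β for every h, and suppose that between every pair of vertices lying in two different blocks an edge is present independently with probability p = c/(n−2k+1). Let X_N be the total number of cycles among the blocks, i.e. the number (summed over m = 2,…,N and over cyclically ordered m-tuples of distinct blocks, counted up to rotation and reversal) of configurations in which the m blocks are joined cyclically by present cross-edges (for m = 2 this requires at least two present edges between the two blocks; for m ≥ 3 it requires m present edges, each joining two consecutive blocks of the cycle). Then E[X_N] → 0 and hence P(X_N > 0) → 0 as n → ∞. -/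

import Mathlib

open Filter
open scoped ENNReal Topology Classical

noncomputable section

/-- Disjoint blocks of vertices of `{1,…,n}` with independent Bernoulli(`q`) cross-edges
between vertices lying in two different blocks. -/
structure BlockEdgeModel (n : ℕ) (q : ℝ) (NB : ℕ) (F : Fin NB → Finset (Fin n)) where
  Ω : Type
  [mΩ : MeasurableSpace Ω]
  μ : MeasureTheory.Measure Ω
  prob : MeasureTheory.IsProbabilityMeasure μ
  edge : Fin n → Fin n → Ω → Bool
  edge_symm : ∀ u v ω, edge u v ω = edge v u ω
  edge_meas : ∀ u v, Measurable (edge u v)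
  edge_indep : ProbabilityTheory.iIndepFun (m := fun _ : {pr : Fin n × Fin n //
          pr.1 < pr.2 ∧ ∃ a b : Fin NB, a ≠ b ∧ pr.1 ∈ F a ∧ pr.2 ∈ F b} =>
        (inferInstance : MeasurableSpace Bool))
      (fun (pr : {pr : Fin n × Fin n //
          pr.1 < pr.2 ∧ ∃ a b : Fin NB, a ≠ b ∧ pr.1 ∈ F a ∧ pr.2 ∈ F b}) ω => edge pr.1.1 pr.1.2 ω) μ
  edge_bern : ∀ pr : {pr : Fin n × Fin n //
        pr.1 < pr.2 ∧ ∃ a b : Fin NB, a ≠ b ∧ pr.1 ∈ F a ∧ pr.2 ∈ F b},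
      μ {ω | edge pr.1.1 pr.1.2 ω = true} = ENNReal.ofReal q

attribute [instance] BlockEdgeModel.mΩ

namespace BlockEdgeModel

variable {n : ℕ} {q : ℝ} {NB : ℕ} {F : Fin NB → Finset (Fin n)} (M : BlockEdgeModel n q NB F)

/-- `X_N`: the total number of cycles among the blocks.  Cyclically ordered tuples of
`m ≥ 3` distinct blocks joined cyclically by present cross-edges are counted up to
rotation and reversal (hence the factor `2m`); for `m = 2` a cycle is a pair of distinct
blocks joined by at least two present cross-edges (ordered pairs, hence the factor 2). -/
def cycleCount (ω : M.Ω) : ℝ :=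
  (Nat.card {pr : Fin NB × Fin NB // pr.1 ≠ pr.2 ∧
      ∃ u v u' v' : Fin n, (u, v) ≠ (u', v') ∧ u ∈ F pr.1 ∧ u' ∈ F pr.1 ∧ v ∈ F pr.2 ∧
        v' ∈ F pr.2 ∧ M.edge u v ω = true ∧ M.edge u' v' ω = true} : ℝ) / 2 +
  ∑ m ∈ Finset.Icc 3 NB,
    (Nat.card {σ : ZMod m ↪ Fin NB //
        ∀ i : ZMod m, ∃ u ∈ F (σ i), ∃ w ∈ F (σ (i + 1)), M.edge u w ω = true} : ℝ) /
      (2 * m)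

end BlockEdgeModel

namespace BlockEdgeModel
open MeasureTheory

variable {n : ℕ} {q : ℝ} {NB : ℕ} {F : Fin NB → Finset (Fin n)} (M : BlockEdgeModel n q NB F)

/-- The index type of potential cross edges. -/
abbrev EIdx (n NB : ℕ) (F : Fin NB → Finset (Fin n)) : Type :=
  {pr : Fin n × Fin n // pr.1 < pr.2 ∧ ∃ a b : Fin NB, a ≠ b ∧ pr.1 ∈ F a ∧ pr.2 ∈ F b}

def pairIdx {u v : Fin n} {a b : Fin NB} (hab : a ≠ b) (hu : u ∈ F a) (hv : v ∈ F b)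
    (huv : u ≠ v) : EIdx n NB F :=
  if h : u < v then ⟨(u, v), h, a, b, hab, hu, hv⟩
  else ⟨(v, u), lt_of_le_of_ne (not_lt.mp h) huv.symm, b, a, hab.symm, hv, hu⟩

lemma pairIdx_val {u v : Fin n} {a b : Fin NB} (hab : a ≠ b) (hu : u ∈ F a) (hv : v ∈ F b)
    (huv : u ≠ v) :
    (pairIdx hab hu hv huv).1 = (u, v) ∨ (pairIdx hab hu hv huv).1 = (v, u) := by
  unfold pairIdx; split <;> simp

lemma edgeEvent_pairIdx {u v : Fin n} {a b : Fin NB} (hab : a ≠ b) (hu : u ∈ F a)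
    (hv : v ∈ F b) (huv : u ≠ v) :
    {ω | M.edge (pairIdx hab hu hv huv).1.1 (pairIdx hab hu hv huv).1.2 ω = true}
      = {ω | M.edge u v ω = true} := by
  unfold pairIdx; split
  · rfl
  · ext ω; simp only [Set.mem_setOf_eq]; rw [M.edge_symm]

lemma measSet_edge (u v : Fin n) : MeasurableSet {ω | M.edge u v ω = true} := by
  have h := (M.edge_meas u v) (measurableSet_singleton true)
  have he : M.edge u v ⁻¹' {true} = {ω | M.edge u v ω = true} := by ext ω; simp
  rwa [he] at h

lemma meas_iInter_edge {κ : Type} [Fintype κ]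
    (g : κ → EIdx n NB F) (hg : Function.Injective g) :
    M.μ (⋂ i, {ω | M.edge (g i).1.1 (g i).1.2 ω = true})
      = ENNReal.ofReal q ^ Fintype.card κ := by
  classical
  have hms : ∀ e : EIdx n NB F, e ∈ Finset.univ.image g →
      @MeasurableSet _ (MeasurableSpace.comap (fun ω => M.edge e.1.1 e.1.2 ω)
        (inferInstance : MeasurableSpace Bool)) {ω | M.edge e.1.1 e.1.2 ω = true} := by
    intro e _
    refine ⟨{true}, measurableSet_singleton true, ?_⟩
    ext ω; simp
  have h := M.edge_indep.meas_biInter (S := Finset.univ.image g)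
      (s := fun e : EIdx n NB F => {ω | M.edge e.1.1 e.1.2 ω = true}) hms
  have h1 : (⋂ i, {ω | M.edge (g i).1.1 (g i).1.2 ω = true})
      = ⋂ e ∈ Finset.univ.image g, {ω | M.edge e.1.1 e.1.2 ω = true} := by
    ext ω
    simp only [Set.mem_iInter, Finset.mem_image, Finset.mem_univ, true_and]
    constructor
    · rintro hw e ⟨i, rfl⟩; exact hw i
    · intro hw i; exact hw (g i) ⟨i, rfl⟩
  rw [h1, h, Finset.prod_image (fun x _ y _ hxy => hg hxy)]
  simp only [M.edge_bern, Finset.prod_const, Finset.card_univ]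


lemma meas_pair_event_set (pr : Fin NB × Fin NB) :
    MeasurableSet {ω | pr.1 ≠ pr.2 ∧ ∃ u v u' v' : Fin n, (u, v) ≠ (u', v') ∧ u ∈ F pr.1 ∧
      u' ∈ F pr.1 ∧ v ∈ F pr.2 ∧ v' ∈ F pr.2 ∧ M.edge u v ω = true ∧
      M.edge u' v' ω = true} := by
  have hset : {ω | pr.1 ≠ pr.2 ∧ ∃ u v u' v' : Fin n, (u, v) ≠ (u', v') ∧ u ∈ F pr.1 ∧
      u' ∈ F pr.1 ∧ v ∈ F pr.2 ∧ v' ∈ F pr.2 ∧ M.edge u v ω = true ∧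
      M.edge u' v' ω = true}
      = ⋃ u : Fin n, ⋃ v : Fin n, ⋃ u' : Fin n, ⋃ v' : Fin n,
        {ω : M.Ω | (pr.1 ≠ pr.2 ∧ (u, v) ≠ (u', v') ∧ u ∈ F pr.1 ∧ u' ∈ F pr.1 ∧
          v ∈ F pr.2 ∧ v' ∈ F pr.2)} ∩
          ({ω | M.edge u v ω = true} ∩ {ω | M.edge u' v' ω = true}) := by
    ext ω
    simp only [Set.mem_setOf_eq, Set.mem_iUnion, Set.mem_inter_iff]
    tauto
  rw [hset]
  refine MeasurableSet.iUnion fun u => MeasurableSet.iUnion fun v =>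
    MeasurableSet.iUnion fun u' => MeasurableSet.iUnion fun v' => ?_
  exact (MeasurableSet.const _).inter ((M.measSet_edge u v).inter (M.measSet_edge u' v'))

lemma meas_cycle_event_set {m : ℕ} (hm : 3 ≤ m) (σ : ZMod m ↪ Fin NB) :
    MeasurableSet {ω | ∀ i : ZMod m, ∃ u ∈ F (σ i), ∃ w ∈ F (σ (i + 1)),
      M.edge u w ω = true} := by
  haveI : NeZero m := ⟨by omega⟩
  have hset : {ω | ∀ i : ZMod m, ∃ u ∈ F (σ i), ∃ w ∈ F (σ (i + 1)), M.edge u w ω = true}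
      = ⋂ i : ZMod m, ⋃ u : Fin n, ⋃ w : Fin n,
        {ω : M.Ω | (u ∈ F (σ i) ∧ w ∈ F (σ (i + 1)))} ∩ {ω | M.edge u w ω = true} := by
    ext ω
    simp only [Set.mem_setOf_eq, Set.mem_iInter, Set.mem_iUnion, Set.mem_inter_iff]
    constructor
    · intro h i; obtain ⟨u, hu, w, hw, he⟩ := h i; exact ⟨u, w, ⟨hu, hw⟩, he⟩
    · intro h i; obtain ⟨u, w, ⟨hu, hw⟩, he⟩ := h i; exact ⟨u, hu, w, hw, he⟩
  rw [hset]
  exact MeasurableSet.iInter fun i => MeasurableSet.iUnion fun u =>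
    MeasurableSet.iUnion fun w => (MeasurableSet.const _).inter (M.measSet_edge u w)


lemma pair_event_bound (hdisj : ∀ a b : Fin NB, a ≠ b → Disjoint (F a) (F b))
    (hq : 0 ≤ q) {B : ℝ} (hB0 : 0 ≤ B) (hB : ∀ a, ((F a).card : ℝ) ≤ B)
    (pr : Fin NB × Fin NB) :
    M.μ {ω | pr.1 ≠ pr.2 ∧ ∃ u v u' v' : Fin n, (u, v) ≠ (u', v') ∧ u ∈ F pr.1 ∧
        u' ∈ F pr.1 ∧ v ∈ F pr.2 ∧ v' ∈ F pr.2 ∧ M.edge u v ω = true ∧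
        M.edge u' v' ω = true}
      ≤ ENNReal.ofReal (B ^ 4 * q ^ 2) := by
  classical
  by_cases hab : pr.1 = pr.2
  · have hempty : {ω | pr.1 ≠ pr.2 ∧ ∃ u v u' v' : Fin n, (u, v) ≠ (u', v') ∧ u ∈ F pr.1 ∧
        u' ∈ F pr.1 ∧ v ∈ F pr.2 ∧ v' ∈ F pr.2 ∧ M.edge u v ω = true ∧
        M.edge u' v' ω = true} = (∅ : Set M.Ω) := by
      ext ω; simp [hab]
    rw [hempty, measure_empty]
    exact zero_le
  · set T : Finset ((Fin n × Fin n) × (Fin n × Fin n)) :=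
      ((F pr.1 ×ˢ F pr.2) ×ˢ (F pr.1 ×ˢ F pr.2)).filter (fun t => t.1 ≠ t.2) with hT
    have hsub : {ω | pr.1 ≠ pr.2 ∧ ∃ u v u' v' : Fin n, (u, v) ≠ (u', v') ∧ u ∈ F pr.1 ∧
        u' ∈ F pr.1 ∧ v ∈ F pr.2 ∧ v' ∈ F pr.2 ∧ M.edge u v ω = true ∧
        M.edge u' v' ω = true}
        ⊆ ⋃ t ∈ T, ({ω | M.edge t.1.1 t.1.2 ω = true} ∩ {ω | M.edge t.2.1 t.2.2 ω = true}) := by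
      rintro ω ⟨-, u, v, u', v', hne, hu, hu', hv, hv', h1, h2⟩
      refine Set.mem_biUnion (show ((u, v), (u', v')) ∈ T from ?_) ⟨h1, h2⟩
      rw [hT, Finset.mem_filter]
      refine ⟨?_, hne⟩
      simp only [Finset.mem_product]
      exact ⟨⟨hu, hv⟩, hu', hv'⟩
    refine (measure_mono hsub).trans ((measure_biUnion_finset_le _ _).trans ?_)
    have hper : ∀ t ∈ T,
        M.μ ({ω | M.edge t.1.1 t.1.2 ω = true} ∩ {ω | M.edge t.2.1 t.2.2 ω = true})
          = ENNReal.ofReal q ^ 2 := by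
      intro t ht
      rw [hT, Finset.mem_filter] at ht
      obtain ⟨hmem, htne⟩ := ht
      simp only [Finset.mem_product] at hmem
      obtain ⟨⟨h11, h12⟩, h21, h22⟩ := hmem
      have hne1 : t.1.1 ≠ t.1.2 := fun h =>
        Finset.disjoint_left.mp (hdisj _ _ hab) h11 (h ▸ h12)
      have hne2 : t.2.1 ≠ t.2.2 := fun h =>
        Finset.disjoint_left.mp (hdisj _ _ hab) h21 (h ▸ h22)
      have hne12 : pairIdx hab h11 h12 hne1 ≠ pairIdx hab h21 h22 hne2 := by
        intro hEq
        have hval : (pairIdx hab h11 h12 hne1).1 = (pairIdx hab h21 h22 hne2).1 := by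
          rw [hEq]
        have hv1 := pairIdx_val hab h11 h12 hne1
        have hv2 := pairIdx_val hab h21 h22 hne2
        rcases hv1 with h1 | h1 <;> rcases hv2 with h2 | h2 <;> rw [h1, h2] at hval <;>
          simp only [Prod.mk.injEq] at hval
        · exact htne (Prod.ext (hval.1) (hval.2))
        · exact Finset.disjoint_left.mp (hdisj _ _ hab) h11 (hval.1 ▸ h22)
        · exact Finset.disjoint_left.mp (hdisj _ _ hab) h21 (hval.1.symm ▸ h12)
        · exact htne (Prod.ext (hval.2) (hval.1))
      set g : Fin 2 → EIdx n NB F :=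
        ![pairIdx hab h11 h12 hne1, pairIdx hab h21 h22 hne2] with hg
      have hginj : Function.Injective g := by
        intro i j hij
        rw [hg] at hij
        fin_cases i <;> fin_cases j
        · rfl
        · exfalso; apply hne12
          simpa using hij
        · exfalso; apply hne12
          have hij' : pairIdx hab h21 h22 hne2 = pairIdx hab h11 h12 hne1 := by
            simpa using hij
          exact hij'.symm
        · rfl
      have hinter : {ω | M.edge t.1.1 t.1.2 ω = true} ∩ {ω | M.edge t.2.1 t.2.2 ω = true}
          = ⋂ i : Fin 2, {ω | M.edge (g i).1.1 (g i).1.2 ω = true} := by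
        have e1 := M.edgeEvent_pairIdx hab h11 h12 hne1
        have e2 := M.edgeEvent_pairIdx hab h21 h22 hne2
        ext ω
        simp only [Set.mem_inter_iff, Set.mem_iInter, Fin.forall_fin_two, hg]
        rw [show (![pairIdx hab h11 h12 hne1, pairIdx hab h21 h22 hne2] 0) =
          pairIdx hab h11 h12 hne1 from rfl, show
          (![pairIdx hab h11 h12 hne1, pairIdx hab h21 h22 hne2] 1) =
          pairIdx hab h21 h22 hne2 from rfl]
        rw [Set.ext_iff] at e1 e2
        have := e1 ω; have := e2 ω
        simp only [Set.mem_setOf_eq] at *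
        tauto
      rw [hinter, M.meas_iInter_edge g hginj, Fintype.card_fin]
    rw [Finset.sum_congr rfl hper, Finset.sum_const, nsmul_eq_mul]
    have hTcard : (T.card : ℝ) ≤ B ^ 4 := by
      have h1 : T.card ≤ (((F pr.1 ×ˢ F pr.2) ×ˢ (F pr.1 ×ˢ F pr.2))).card := by
        rw [hT]; exact Finset.card_filter_le _ _
      have h2 : (((F pr.1 ×ˢ F pr.2) ×ˢ (F pr.1 ×ˢ F pr.2))).card
          = ((F pr.1).card * (F pr.2).card) * ((F pr.1).card * (F pr.2).card) := by
        simp [Finset.card_product]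
      have h3 : (T.card : ℝ) ≤ (((F pr.1).card : ℝ) * ((F pr.2).card : ℝ))
          * (((F pr.1).card : ℝ) * ((F pr.2).card : ℝ)) := by
        have := h1.trans_eq h2
        exact_mod_cast Nat.cast_le.mpr this
      have hc1 := hB pr.1; have hc2 := hB pr.2
      have hn1 : (0:ℝ) ≤ ((F pr.1).card : ℝ) := Nat.cast_nonneg _
      have hn2 : (0:ℝ) ≤ ((F pr.2).card : ℝ) := Nat.cast_nonneg _
      have hm1 : ((F pr.1).card : ℝ) * ((F pr.2).card : ℝ) ≤ B * B :=
        mul_le_mul hc1 hc2 hn2 hB0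
      have hm0 : (0:ℝ) ≤ ((F pr.1).card : ℝ) * ((F pr.2).card : ℝ) := mul_nonneg hn1 hn2
      have hm2 : ((F pr.1).card : ℝ) * ((F pr.2).card : ℝ)
          * (((F pr.1).card : ℝ) * ((F pr.2).card : ℝ)) ≤ (B * B) * (B * B) :=
        mul_le_mul hm1 hm1 hm0 (mul_nonneg hB0 hB0)
      have : (B * B) * (B * B) = B ^ 4 := by ring
      linarith
    calc (T.card : ℝ≥0∞) * ENNReal.ofReal q ^ 2
        = ENNReal.ofReal ((T.card : ℝ) * q ^ 2) := by
          rw [ENNReal.ofReal_mul (Nat.cast_nonneg _), ENNReal.ofReal_natCast,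
            ENNReal.ofReal_pow hq]
      _ ≤ ENNReal.ofReal (B ^ 4 * q ^ 2) := by
          apply ENNReal.ofReal_le_ofReal
          exact mul_le_mul_of_nonneg_right hTcard (sq_nonneg q)


lemma cycle_event_bound (hdisj : ∀ a b : Fin NB, a ≠ b → Disjoint (F a) (F b))
    (hq : 0 ≤ q) {B : ℝ} (hB0 : 0 ≤ B) (hB : ∀ a, ((F a).card : ℝ) ≤ B)
    {m : ℕ} (hm : 3 ≤ m) (σ : ZMod m ↪ Fin NB) :
    M.μ {ω | ∀ i : ZMod m, ∃ u ∈ F (σ i), ∃ w ∈ F (σ (i + 1)), M.edge u w ω = true}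
      ≤ ENNReal.ofReal ((B ^ 2 * q) ^ m) := by
  classical
  haveI : NeZero m := ⟨by omega⟩
  have h2ne : (2 : ZMod m) ≠ 0 := by
    intro h
    have h2 : ((2 : ℕ) : ZMod m) = 0 := by push_cast; exact h
    rw [ZMod.natCast_eq_zero_iff] at h2
    have := Nat.le_of_dvd (by norm_num) h2
    omega
  have hblock : ∀ {x : Fin n} {a b : Fin NB}, x ∈ F a → x ∈ F b → a = b := by
    intro x a b hxa hxb
    by_contra hne
    exact Finset.disjoint_left.mp (hdisj a b hne) hxa hxb
  set T := Fintype.piFinset (fun i : ZMod m => (F (σ i)) ×ˢ (F (σ (i + 1)))) with hT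
  have hsub : {ω | ∀ i : ZMod m, ∃ u ∈ F (σ i), ∃ w ∈ F (σ (i + 1)), M.edge u w ω = true}
      ⊆ ⋃ f ∈ T, ⋂ i : ZMod m, {ω | M.edge (f i).1 (f i).2 ω = true} := by
    intro ω hω
    choose u hu w hw he using hω
    have hmem : (fun i => (u i, w i)) ∈ T := by
      rw [hT, Fintype.mem_piFinset]
      exact fun i => Finset.mem_product.mpr ⟨hu i, hw i⟩
    exact Set.mem_biUnion hmem (Set.mem_iInter.mpr he)
  refine (measure_mono hsub).trans ((measure_biUnion_finset_le _ _).trans ?_)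
  have hper : ∀ f ∈ T, M.μ (⋂ i : ZMod m, {ω | M.edge (f i).1 (f i).2 ω = true})
      = ENNReal.ofReal q ^ m := by
    intro f hf
    rw [hT, Fintype.mem_piFinset] at hf
    have hu : ∀ i, (f i).1 ∈ F (σ i) := fun i => (Finset.mem_product.mp (hf i)).1
    have hw : ∀ i, (f i).2 ∈ F (σ (i + 1)) := fun i => (Finset.mem_product.mp (hf i)).2
    have hab : ∀ i : ZMod m, σ i ≠ σ (i + 1) := by
      intro i h
      have h1 : i = i + 1 := σ.injective h
      have h1' : i + 1 = i + 0 := by rw [add_zero]; exact h1.symm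
      have h3 : (1 : ZMod m) = 0 := add_left_cancel h1'
      haveI : Fact (1 < m) := ⟨by omega⟩
      exact one_ne_zero h3
    have hne : ∀ i, (f i).1 ≠ (f i).2 := fun i h =>
      Finset.disjoint_left.mp (hdisj _ _ (hab i)) (hu i) (h ▸ hw i)
    have hginj : Function.Injective
        (fun i => pairIdx (hab i) (hu i) (hw i) (hne i)) := by
      intro i j hij
      have hij' : pairIdx (hab i) (hu i) (hw i) (hne i)
          = pairIdx (hab j) (hu j) (hw j) (hne j) := hij
      have hval : (pairIdx (hab i) (hu i) (hw i) (hne i)).1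
          = (pairIdx (hab j) (hu j) (hw j) (hne j)).1 := congrArg Subtype.val hij'
      have hvi := pairIdx_val (hab i) (hu i) (hw i) (hne i)
      have hvj := pairIdx_val (hab j) (hu j) (hw j) (hne j)
      have key : ((f i).1 = (f j).1 ∧ (f i).2 = (f j).2)
          ∨ ((f i).1 = (f j).2 ∧ (f i).2 = (f j).1) := by
        rcases hvi with h1 | h1 <;> rcases hvj with h2 | h2 <;> rw [h1, h2] at hval <;>
          simp only [Prod.mk.injEq] at hval <;> tauto
      rcases key with ⟨e1, e2⟩ | ⟨e1, e2⟩
      · have hm1 : (f i).1 ∈ F (σ j) := by rw [e1]; exact hu j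
        exact σ.injective (hblock (hu i) hm1)
      · have hm1 : (f i).1 ∈ F (σ (j + 1)) := by rw [e1]; exact hw j
        have hm2 : (f i).2 ∈ F (σ j) := by rw [e2]; exact hu j
        have hij1 : i = j + 1 := σ.injective (hblock (hu i) hm1)
        have hij2 : i + 1 = j := σ.injective (hblock (hw i) hm2)
        exfalso
        apply h2ne
        have hcalc : i + 2 = i + 0 := by
          rw [add_zero]
          calc i + 2 = (i + 1) + 1 := by ring
            _ = j + 1 := by rw [hij2]
            _ = i := hij1.symm
        exact add_left_cancel hcalc
    have hiter : (⋂ i : ZMod m, {ω | M.edge (f i).1 (f i).2 ω = true})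
        = ⋂ i : ZMod m, {ω | M.edge (pairIdx (hab i) (hu i) (hw i) (hne i)).1.1
            (pairIdx (hab i) (hu i) (hw i) (hne i)).1.2 ω = true} := by
      refine Set.iInter_congr fun i => ?_
      exact (M.edgeEvent_pairIdx (hab i) (hu i) (hw i) (hne i)).symm
    rw [hiter, M.meas_iInter_edge _ hginj, ZMod.card]
  rw [Finset.sum_congr rfl hper, Finset.sum_const, nsmul_eq_mul]
  have hTcard : (T.card : ℝ) ≤ (B ^ 2) ^ m := by
    have h1 : T.card = ∏ i : ZMod m, ((F (σ i)) ×ˢ (F (σ (i + 1)))).card := by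
      rw [hT, Fintype.card_piFinset]
    have h2 : (T.card : ℝ) = ∏ i : ZMod m, (((F (σ i)).card : ℝ) * ((F (σ (i + 1))).card : ℝ)) := by
      rw [h1]; push_cast [Finset.card_product]; rfl
    rw [h2]
    calc ∏ i : ZMod m, (((F (σ i)).card : ℝ) * ((F (σ (i + 1))).card : ℝ))
        ≤ ∏ _i : ZMod m, (B * B) := by
          refine Finset.prod_le_prod (fun i _ => mul_nonneg (Nat.cast_nonneg _) (Nat.cast_nonneg _))
            (fun i _ => mul_le_mul (hB _) (hB _) (Nat.cast_nonneg _) hB0)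
      _ = (B ^ 2) ^ m := by
          rw [Finset.prod_const, Finset.card_univ, ZMod.card]; ring
  calc (T.card : ℝ≥0∞) * ENNReal.ofReal q ^ m
      = ENNReal.ofReal ((T.card : ℝ) * q ^ m) := by
        rw [ENNReal.ofReal_mul (Nat.cast_nonneg _), ENNReal.ofReal_natCast,
          ENNReal.ofReal_pow hq]
    _ ≤ ENNReal.ofReal ((B ^ 2 * q) ^ m) := by
        apply ENNReal.ofReal_le_ofReal
        rw [mul_pow]
        exact mul_le_mul_of_nonneg_right hTcard (pow_nonneg hq m)


end BlockEdgeModel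

section
open MeasureTheory

-- Lemma C: integral of Nat.card count
lemma integral_natCard_subtype {Ω : Type} [MeasurableSpace Ω] {μ : MeasureTheory.Measure Ω}
    [IsProbabilityMeasure μ] {S : Type} [Fintype S] (P : S → Ω → Prop)
    (hP : ∀ s, MeasurableSet {ω | P s ω}) :
    Integrable (fun ω => (Nat.card {s // P s ω} : ℝ)) μ ∧
      ∫ ω, (Nat.card {s // P s ω} : ℝ) ∂μ = ∑ s, (μ {ω | P s ω}).toReal := by
  have hfun : (fun ω => (Nat.card {s // P s ω} : ℝ))
      = fun ω => ∑ s : S, Set.indicator {ω' | P s ω'} (fun _ => (1:ℝ)) ω := by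
    funext ω
    rw [Nat.card_eq_fintype_card, Fintype.card_subtype, Finset.card_filter]
    push_cast
    refine Finset.sum_congr rfl fun s _ => ?_
    by_cases h : P s ω <;> simp [h, Set.indicator]
  have hint : ∀ s : S, Integrable (Set.indicator {ω' | P s ω'} (fun _ => (1:ℝ))) μ :=
    fun s => (integrable_const 1).indicator (hP s)
  constructor
  · rw [hfun]; exact integrable_finset_sum _ fun s _ => hint s
  · rw [hfun, integral_finset_sum _ fun s _ => hint s]
    refine Finset.sum_congr rfl fun s _ => ?_
    rw [integral_indicator_const (1:ℝ) (hP s)]; simp [Measure.real]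

lemma geom_tail_bound {x : ℝ} (hx0 : 0 ≤ x) (hx : x ≤ 1/2) (a N : ℕ) :
    ∑ m ∈ Finset.Icc a N, x ^ m ≤ 2 * x ^ a := by
  have h1 : Finset.Icc a N = Finset.Ico a (N+1) := by rw [Finset.Ico_add_one_right_eq_Icc]
  rw [h1, Finset.sum_Ico_eq_sum_range]
  calc ∑ i ∈ Finset.range (N + 1 - a), x ^ (a + i)
      = x ^ a * ∑ i ∈ Finset.range (N + 1 - a), x ^ i := by
        rw [Finset.mul_sum]; exact Finset.sum_congr rfl fun i _ => pow_add x a i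
    _ ≤ x ^ a * ∑ i ∈ Finset.range (N + 1 - a), (1/2 : ℝ) ^ i := by
        gcongr with i _ <;> first | exact pow_nonneg hx0 a | exact pow_le_pow_left₀ hx0 hx i
    _ ≤ x ^ a * 2 := by
        have := sum_geometric_two_le (N + 1 - a)
        gcongr
    _ = 2 * x ^ a := mul_comm _ _

end

set_option maxHeartbeats 1000000 in
open MeasureTheory in
theorem expected_cycles_vanish (β γ c C : ℝ) (k : ℕ)
    (hβ0 : 0 < β) (hβ : β < 1/2) (hγ0 : 0 < γ) (hγ : γ < 1 - 2 * β)
    (hc : 0 < c) (hC : 0 < C)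
    (NB : ℕ → ℕ) (F : ∀ n : ℕ, Fin (NB n) → Finset (Fin n))
    (hNB : ∀ n : ℕ, (NB n : ℝ) ≤ C * (n : ℝ) ^ γ)
    (hFne : ∀ n a, (F n a).Nonempty)
    (hFcard : ∀ n a, ((F n a).card : ℝ) ≤ C * (n : ℝ) ^ β)
    (hFdisj : ∀ n, ∀ a b, a ≠ b → Disjoint (F n a) (F n b)) :
    ∀ ε : ℝ, 0 < ε → ∃ N : ℕ, ∀ n : ℕ, N ≤ n →
      ∀ M : BlockEdgeModel n (c / ((n : ℝ) - 2 * k + 1)) (NB n) (F n),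
        |∫ ω, M.cycleCount ω ∂M.μ| < ε ∧ (M.μ {ω | 0 < M.cycleCount ω}).toReal < ε := by
  intro ε hε
  set e : ℝ := γ + 2 * β - 1 with he
  have hener : e < 0 := by rw [he]; linarith
  have htend : Filter.Tendsto (fun nn : ℕ => (2 * c * C ^ 3) * (nn : ℝ) ^ e)
      Filter.atTop (nhds 0) := by
    have h1 := tendsto_rpow_neg_atTop (y := -e) (by linarith)
    simp only [neg_neg] at h1
    have h2 := (h1.comp tendsto_natCast_atTop_atTop).const_mul (2 * c * C ^ 3)
    simpa using h2
  set δ : ℝ := min (1/2) (Real.sqrt (ε/2)) with hδ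
  have hδpos : 0 < δ := lt_min (by norm_num) (Real.sqrt_pos.mpr (by linarith))
  obtain ⟨N₀, hN₀⟩ := Filter.eventually_atTop.mp (htend.eventually_lt_const hδpos)
  refine ⟨max N₀ (4 * k + 2), fun n hn => ?_⟩
  have hn0 : N₀ ≤ n := le_trans (le_max_left _ _) hn
  have hnk : 4 * k + 2 ≤ n := le_trans (le_max_right _ _) hn
  have hnR : (4 * (k:ℝ) + 2) ≤ (n:ℝ) := by exact_mod_cast hnk
  have hk0 : (0:ℝ) ≤ (k:ℝ) := Nat.cast_nonneg k
  have hnpos : (0:ℝ) < n := by linarith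
  set qr : ℝ := c / ((n:ℝ) - 2 * k + 1) with hqr
  intro M
  haveI : IsProbabilityMeasure M.μ := M.prob
  have hdenpos : (0:ℝ) < (n:ℝ) - 2 * k + 1 := by linarith
  have hq0 : 0 ≤ qr := div_nonneg hc.le hdenpos.le
  have hqb : qr ≤ 2 * c / (n:ℝ) := by
    rw [hqr, div_le_div_iff₀ hdenpos hnpos]
    nlinarith
  set B : ℝ := C * (n:ℝ) ^ β with hBdef
  have hrpowβ : (0:ℝ) < (n:ℝ) ^ β := Real.rpow_pos_of_pos hnpos β
  have hrpowγ : (0:ℝ) < (n:ℝ) ^ γ := Real.rpow_pos_of_pos hnpos γ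
  have hB0 : 0 ≤ B := by positivity
  have hB : ∀ a, ((F n a).card : ℝ) ≤ B := hFcard n
  set x : ℝ := (C * (n:ℝ) ^ γ) * B ^ 2 * qr with hx
  have hx0 : 0 ≤ x := by positivity
  have hxle : x ≤ (2 * c * C ^ 3) * (n:ℝ) ^ e := by
    have h1 : x ≤ (C * (n:ℝ) ^ γ) * B ^ 2 * (2 * c / n) :=
      mul_le_mul_of_nonneg_left hqb (by positivity)
    have h3 : (n:ℝ) ^ γ * (n:ℝ) ^ β * (n:ℝ) ^ β / (n:ℝ) = (n:ℝ) ^ e := by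
      have h4 : (n:ℝ) ^ e = (n:ℝ) ^ (γ + 2*β) / (n:ℝ) ^ (1:ℝ) := by
        rw [he, ← Real.rpow_sub hnpos]
      rw [h4, Real.rpow_one]
      congr 1
      rw [← Real.rpow_add hnpos, ← Real.rpow_add hnpos]
      congr 1
      ring
    have h2 : (C * (n:ℝ) ^ γ) * B ^ 2 * (2 * c / n)
        = (2 * c * C ^ 3) * ((n:ℝ) ^ γ * (n:ℝ) ^ β * (n:ℝ) ^ β / (n:ℝ)) := by
      rw [hBdef]; ring
    rw [h2, h3] at h1
    exact h1
  have hxδ : x < δ := lt_of_le_of_lt hxle (hN₀ n hn0)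
  have hxhalf : x ≤ 1/2 := le_of_lt (lt_of_lt_of_le hxδ (min_le_left _ _))
  have hx2ε : 2 * x ^ 2 < ε := by
    have h1 : x < Real.sqrt (ε/2) := lt_of_lt_of_le hxδ (min_le_right _ _)
    have h2 : x ^ 2 < ε / 2 := (Real.lt_sqrt hx0).mp h1
    linarith
  -- the predicates
  set P2 : Fin (NB n) × Fin (NB n) → M.Ω → Prop := fun pr ω => pr.1 ≠ pr.2 ∧
      ∃ u v u' v' : Fin n, (u, v) ≠ (u', v') ∧ u ∈ F n pr.1 ∧ u' ∈ F n pr.1 ∧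
        v ∈ F n pr.2 ∧ v' ∈ F n pr.2 ∧ M.edge u v ω = true ∧ M.edge u' v' ω = true
    with hP2def
  have hccdef : M.cycleCount = fun ω => (Nat.card {pr // P2 pr ω} : ℝ) / 2 +
      ∑ m ∈ Finset.Icc 3 (NB n),
        (Nat.card {σ : ZMod m ↪ Fin (NB n) //
          ∀ i : ZMod m, ∃ u ∈ F n (σ i), ∃ w ∈ F n (σ (i + 1)),
            M.edge u w ω = true} : ℝ) / (2 * m) := rfl
  -- key bound for the 2-cycle part
  have hkey2 : Integrable (fun ω => (Nat.card {pr // P2 pr ω} : ℝ)) M.μ ∧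
      (0 ≤ ∫ ω, (Nat.card {pr // P2 pr ω} : ℝ) ∂M.μ ∧
        ∫ ω, (Nat.card {pr // P2 pr ω} : ℝ) ∂M.μ ≤ x ^ 2) := by
    obtain ⟨hint, hval⟩ := integral_natCard_subtype (μ := M.μ) P2
      (fun pr => M.meas_pair_event_set pr)
    refine ⟨hint, ?_, ?_⟩
    · rw [hval]
      exact Finset.sum_nonneg fun pr _ => ENNReal.toReal_nonneg
    · rw [hval]
      have hper : ∀ pr : Fin (NB n) × Fin (NB n),
          (M.μ {ω | P2 pr ω}).toReal ≤ B ^ 4 * qr ^ 2 := by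
        intro pr
        have hb := M.pair_event_bound (hFdisj n) hq0 hB0 hB pr
        exact ENNReal.toReal_le_of_le_ofReal (by positivity) hb
      calc ∑ pr : Fin (NB n) × Fin (NB n), (M.μ {ω | P2 pr ω}).toReal
          ≤ (Finset.univ : Finset (Fin (NB n) × Fin (NB n))).card • (B ^ 4 * qr ^ 2) :=
            Finset.sum_le_card_nsmul _ _ _ (fun pr _ => hper pr)
        _ = ((NB n : ℝ)) ^ 2 * (B ^ 4 * qr ^ 2) := by
            rw [Finset.card_univ, Fintype.card_prod, Fintype.card_fin, nsmul_eq_mul]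
            push_cast; ring
        _ ≤ (C * (n:ℝ) ^ γ) ^ 2 * (B ^ 4 * qr ^ 2) := by
            apply mul_le_mul_of_nonneg_right _ (by positivity)
            exact pow_le_pow_left₀ (Nat.cast_nonneg _) (hNB n) 2
        _ = x ^ 2 := by rw [hx]; ring
  -- key bound for the m-cycle parts
  have hkey : ∀ m ∈ Finset.Icc 3 (NB n),
      Integrable (fun ω => (Nat.card {σ : ZMod m ↪ Fin (NB n) //
          ∀ i : ZMod m, ∃ u ∈ F n (σ i), ∃ w ∈ F n (σ (i + 1)),
            M.edge u w ω = true} : ℝ)) M.μ ∧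
      (0 ≤ ∫ ω, (Nat.card {σ : ZMod m ↪ Fin (NB n) //
          ∀ i : ZMod m, ∃ u ∈ F n (σ i), ∃ w ∈ F n (σ (i + 1)),
            M.edge u w ω = true} : ℝ) ∂M.μ ∧
        ∫ ω, (Nat.card {σ : ZMod m ↪ Fin (NB n) //
          ∀ i : ZMod m, ∃ u ∈ F n (σ i), ∃ w ∈ F n (σ (i + 1)),
            M.edge u w ω = true} : ℝ) ∂M.μ ≤ x ^ m) := by
    intro m hmm
    have hm3 : 3 ≤ m := (Finset.mem_Icc.mp hmm).1
    haveI : NeZero m := ⟨by omega⟩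
    obtain ⟨hint, hval⟩ := integral_natCard_subtype (μ := M.μ)
      (fun (σ : ZMod m ↪ Fin (NB n)) ω =>
        ∀ i : ZMod m, ∃ u ∈ F n (σ i), ∃ w ∈ F n (σ (i + 1)), M.edge u w ω = true)
      (fun σ => M.meas_cycle_event_set hm3 σ)
    refine ⟨hint, ?_, ?_⟩
    · rw [hval]
      exact Finset.sum_nonneg fun σ _ => ENNReal.toReal_nonneg
    · rw [hval]
      have hper : ∀ σ : ZMod m ↪ Fin (NB n),
          (M.μ {ω | ∀ i : ZMod m, ∃ u ∈ F n (σ i), ∃ w ∈ F n (σ (i + 1)),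
            M.edge u w ω = true}).toReal ≤ (B ^ 2 * qr) ^ m := by
        intro σ
        have hb := M.cycle_event_bound (hFdisj n) hq0 hB0 hB hm3 σ
        exact ENNReal.toReal_le_of_le_ofReal (by positivity) hb
      have hcard : (Fintype.card (ZMod m ↪ Fin (NB n)) : ℝ) ≤ ((NB n : ℝ)) ^ m := by
        have h1 : Fintype.card (ZMod m ↪ Fin (NB n))
            ≤ Fintype.card (ZMod m → Fin (NB n)) :=
          Fintype.card_le_of_injective _ DFunLike.coe_injective
        have h2 : Fintype.card (ZMod m → Fin (NB n)) = (NB n) ^ m := by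
          rw [Fintype.card_fun, Fintype.card_fin, ZMod.card]
        rw [h2] at h1
        exact_mod_cast h1
      calc ∑ σ : ZMod m ↪ Fin (NB n), (M.μ {ω | ∀ i : ZMod m,
            ∃ u ∈ F n (σ i), ∃ w ∈ F n (σ (i + 1)), M.edge u w ω = true}).toReal
          ≤ (Finset.univ : Finset (ZMod m ↪ Fin (NB n))).card • ((B ^ 2 * qr) ^ m) :=
            Finset.sum_le_card_nsmul _ _ _ (fun σ _ => hper σ)
        _ = (Fintype.card (ZMod m ↪ Fin (NB n)) : ℝ) * (B ^ 2 * qr) ^ m := by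
            rw [Finset.card_univ, nsmul_eq_mul]
        _ ≤ ((NB n : ℝ)) ^ m * (B ^ 2 * qr) ^ m :=
            mul_le_mul_of_nonneg_right hcard (by positivity)
        _ ≤ (C * (n:ℝ) ^ γ) ^ m * (B ^ 2 * qr) ^ m :=
            mul_le_mul_of_nonneg_right
              (pow_le_pow_left₀ (Nat.cast_nonneg _) (hNB n) m) (by positivity)
        _ = x ^ m := by rw [hx, ← mul_pow]; ring_nf
  -- the integral identity
  have hintsum : Integrable (fun ω => ∑ m ∈ Finset.Icc 3 (NB n),
      (Nat.card {σ : ZMod m ↪ Fin (NB n) //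
        ∀ i : ZMod m, ∃ u ∈ F n (σ i), ∃ w ∈ F n (σ (i + 1)),
          M.edge u w ω = true} : ℝ) / (2 * m)) M.μ :=
    integrable_finset_sum _ (fun m hmm => ((hkey m hmm).1).div_const _)
  have hEq : ∫ ω, M.cycleCount ω ∂M.μ
      = (∫ ω, (Nat.card {pr // P2 pr ω} : ℝ) ∂M.μ) / 2
        + ∑ m ∈ Finset.Icc 3 (NB n),
          (∫ ω, (Nat.card {σ : ZMod m ↪ Fin (NB n) //
            ∀ i : ZMod m, ∃ u ∈ F n (σ i), ∃ w ∈ F n (σ (i + 1)),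
              M.edge u w ω = true} : ℝ) ∂M.μ) / (2 * m) := by
    rw [hccdef, integral_add (hkey2.1.div_const 2) hintsum, integral_div,
      integral_finset_sum _ (fun m hmm => ((hkey m hmm).1).div_const _)]
    congr 1
    exact Finset.sum_congr rfl fun m hmm => integral_div _ _
  have hsum3 : ∑ m ∈ Finset.Icc 3 (NB n), x ^ m ≤ 2 * x ^ 3 :=
    geom_tail_bound hx0 hxhalf 3 (NB n)
  have h2x3 : 2 * x ^ 3 ≤ x ^ 2 := by nlinarith
  have hEb : ∫ ω, M.cycleCount ω ∂M.μ ≤ 2 * x ^ 2 := by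
    rw [hEq]
    have t1 : (∫ ω, (Nat.card {pr // P2 pr ω} : ℝ) ∂M.μ) / 2 ≤ x ^ 2 := by
      have := hkey2.2.2
      have h0 := hkey2.2.1
      linarith [div_le_self h0 (by norm_num : (1:ℝ) ≤ 2)]
    have t2 : ∑ m ∈ Finset.Icc 3 (NB n),
        (∫ ω, (Nat.card {σ : ZMod m ↪ Fin (NB n) //
          ∀ i : ZMod m, ∃ u ∈ F n (σ i), ∃ w ∈ F n (σ (i + 1)),
            M.edge u w ω = true} : ℝ) ∂M.μ) / (2 * m)
        ≤ ∑ m ∈ Finset.Icc 3 (NB n), x ^ m := by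
      refine Finset.sum_le_sum fun m hmm => ?_
      have hm3 : 3 ≤ m := (Finset.mem_Icc.mp hmm).1
      have h1m : (1:ℝ) ≤ 2 * m := by
        have : (3:ℝ) ≤ m := by exact_mod_cast hm3
        linarith
      calc (∫ ω, (Nat.card {σ : ZMod m ↪ Fin (NB n) //
            ∀ i : ZMod m, ∃ u ∈ F n (σ i), ∃ w ∈ F n (σ (i + 1)),
              M.edge u w ω = true} : ℝ) ∂M.μ) / (2 * m)
          ≤ ∫ ω, (Nat.card {σ : ZMod m ↪ Fin (NB n) //
            ∀ i : ZMod m, ∃ u ∈ F n (σ i), ∃ w ∈ F n (σ (i + 1)),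
              M.edge u w ω = true} : ℝ) ∂M.μ := div_le_self (hkey m hmm).2.1 h1m
        _ ≤ x ^ m := (hkey m hmm).2.2
    linarith
  have hE0 : 0 ≤ ∫ ω, M.cycleCount ω ∂M.μ := by
    rw [hEq]
    refine add_nonneg (div_nonneg hkey2.2.1 (by norm_num)) ?_
    refine Finset.sum_nonneg fun m hmm => div_nonneg (hkey m hmm).2.1 ?_
    positivity
  constructor
  · rw [abs_of_nonneg hE0]
    exact lt_of_le_of_lt (hEb.trans (by linarith)) hx2ε
  · -- probability part
    have hsub : {ω | 0 < M.cycleCount ω} ⊆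
        (⋃ pr : Fin (NB n) × Fin (NB n), {ω | P2 pr ω}) ∪
        (⋃ m ∈ Finset.Icc 3 (NB n), ⋃ σ : ZMod m ↪ Fin (NB n),
          {ω | ∀ i : ZMod m, ∃ u ∈ F n (σ i), ∃ w ∈ F n (σ (i + 1)),
            M.edge u w ω = true}) := by
      intro ω hω
      by_contra hcon
      simp only [Set.mem_union, Set.mem_iUnion, Set.mem_setOf_eq, not_or,
        not_exists, exists_prop] at hcon
      obtain ⟨hc1, hc2⟩ := hcon
      have hzero : M.cycleCount ω = 0 := by
        rw [hccdef]
        have z1 : (Nat.card {pr // P2 pr ω} : ℝ) = 0 := by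
          haveI : IsEmpty {pr // P2 pr ω} := ⟨fun s => hc1 s.1 s.2⟩
          simp [Nat.card_of_isEmpty]
        have z2 : ∀ m ∈ Finset.Icc 3 (NB n),
            (Nat.card {σ : ZMod m ↪ Fin (NB n) //
              ∀ i : ZMod m, ∃ u ∈ F n (σ i), ∃ w ∈ F n (σ (i + 1)),
                M.edge u w ω = true} : ℝ) / (2 * m) = 0 := by
          intro m hmm
          haveI : IsEmpty {σ : ZMod m ↪ Fin (NB n) //
              ∀ i : ZMod m, ∃ u ∈ F n (σ i), ∃ w ∈ F n (σ (i + 1)),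
                M.edge u w ω = true} := ⟨fun s => hc2 m ⟨hmm, s.1, s.2⟩⟩
          simp [Nat.card_of_isEmpty]
        simp only [z1, Finset.sum_eq_zero z2]
        norm_num
      rw [Set.mem_setOf_eq, hzero] at hω
      exact lt_irrefl 0 hω
    have hu1 : M.μ (⋃ pr : Fin (NB n) × Fin (NB n), {ω | P2 pr ω})
        ≤ ENNReal.ofReal (x ^ 2) := by
      refine (measure_iUnion_le _).trans ?_
      rw [tsum_fintype]
      calc ∑ pr : Fin (NB n) × Fin (NB n), M.μ {ω | P2 pr ω}
          ≤ ∑ _pr : Fin (NB n) × Fin (NB n), ENNReal.ofReal (B ^ 4 * qr ^ 2) :=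
            Finset.sum_le_sum fun pr _ => M.pair_event_bound (hFdisj n) hq0 hB0 hB pr
        _ = ((Finset.univ : Finset (Fin (NB n) × Fin (NB n))).card : ℝ≥0∞)
            * ENNReal.ofReal (B ^ 4 * qr ^ 2) := by
            rw [Finset.sum_const, nsmul_eq_mul]
        _ ≤ ENNReal.ofReal (x ^ 2) := by
            rw [← ENNReal.ofReal_natCast, ← ENNReal.ofReal_mul (Nat.cast_nonneg _)]
            apply ENNReal.ofReal_le_ofReal
            rw [Finset.card_univ, Fintype.card_prod, Fintype.card_fin]
            have h1 : ((NB n * NB n : ℕ) : ℝ) = ((NB n : ℝ)) ^ 2 := by push_cast; ring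
            rw [h1]
            calc ((NB n : ℝ)) ^ 2 * (B ^ 4 * qr ^ 2)
                ≤ (C * (n:ℝ) ^ γ) ^ 2 * (B ^ 4 * qr ^ 2) :=
                  mul_le_mul_of_nonneg_right
                    (pow_le_pow_left₀ (Nat.cast_nonneg _) (hNB n) 2) (by positivity)
              _ = x ^ 2 := by rw [hx]; ring
    have hu2 : M.μ (⋃ m ∈ Finset.Icc 3 (NB n), ⋃ σ : ZMod m ↪ Fin (NB n),
          {ω | ∀ i : ZMod m, ∃ u ∈ F n (σ i), ∃ w ∈ F n (σ (i + 1)),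
            M.edge u w ω = true})
        ≤ ENNReal.ofReal (x ^ 2) := by
      refine (measure_biUnion_finset_le _ _).trans ?_
      have hperm : ∀ m ∈ Finset.Icc 3 (NB n),
          M.μ (⋃ σ : ZMod m ↪ Fin (NB n),
            {ω | ∀ i : ZMod m, ∃ u ∈ F n (σ i), ∃ w ∈ F n (σ (i + 1)),
              M.edge u w ω = true}) ≤ ENNReal.ofReal (x ^ m) := by
        intro m hmm
        have hm3 : 3 ≤ m := (Finset.mem_Icc.mp hmm).1
        haveI : NeZero m := ⟨by omega⟩
        refine (measure_iUnion_le _).trans ?_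
        rw [tsum_fintype]
        calc ∑ σ : ZMod m ↪ Fin (NB n), M.μ {ω | ∀ i : ZMod m,
              ∃ u ∈ F n (σ i), ∃ w ∈ F n (σ (i + 1)), M.edge u w ω = true}
            ≤ ∑ _σ : ZMod m ↪ Fin (NB n), ENNReal.ofReal ((B ^ 2 * qr) ^ m) :=
              Finset.sum_le_sum fun σ _ =>
                M.cycle_event_bound (hFdisj n) hq0 hB0 hB hm3 σ
          _ = ((Finset.univ : Finset (ZMod m ↪ Fin (NB n))).card : ℝ≥0∞)
              * ENNReal.ofReal ((B ^ 2 * qr) ^ m) := by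
              rw [Finset.sum_const, nsmul_eq_mul]
          _ ≤ ENNReal.ofReal (x ^ m) := by
              rw [← ENNReal.ofReal_natCast, ← ENNReal.ofReal_mul (Nat.cast_nonneg _)]
              apply ENNReal.ofReal_le_ofReal
              rw [Finset.card_univ]
              have hcard : (Fintype.card (ZMod m ↪ Fin (NB n)) : ℝ) ≤ ((NB n : ℝ)) ^ m := by
                have h1 : Fintype.card (ZMod m ↪ Fin (NB n))
                    ≤ Fintype.card (ZMod m → Fin (NB n)) :=
                  Fintype.card_le_of_injective _ DFunLike.coe_injective
                have h2 : Fintype.card (ZMod m → Fin (NB n)) = (NB n) ^ m := by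
                  rw [Fintype.card_fun, Fintype.card_fin, ZMod.card]
                rw [h2] at h1
                exact_mod_cast h1
              calc (Fintype.card (ZMod m ↪ Fin (NB n)) : ℝ) * (B ^ 2 * qr) ^ m
                  ≤ ((NB n : ℝ)) ^ m * (B ^ 2 * qr) ^ m :=
                    mul_le_mul_of_nonneg_right hcard (by positivity)
                _ ≤ (C * (n:ℝ) ^ γ) ^ m * (B ^ 2 * qr) ^ m :=
                    mul_le_mul_of_nonneg_right
                      (pow_le_pow_left₀ (Nat.cast_nonneg _) (hNB n) m) (by positivity)
                _ = x ^ m := by rw [hx, ← mul_pow]; ring_nf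
      calc ∑ m ∈ Finset.Icc 3 (NB n), M.μ (⋃ σ : ZMod m ↪ Fin (NB n),
            {ω | ∀ i : ZMod m, ∃ u ∈ F n (σ i), ∃ w ∈ F n (σ (i + 1)),
              M.edge u w ω = true})
          ≤ ∑ m ∈ Finset.Icc 3 (NB n), ENNReal.ofReal (x ^ m) :=
            Finset.sum_le_sum hperm
        _ = ENNReal.ofReal (∑ m ∈ Finset.Icc 3 (NB n), x ^ m) := by
            rw [ENNReal.ofReal_sum_of_nonneg (fun m _ => pow_nonneg hx0 m)]
        _ ≤ ENNReal.ofReal (x ^ 2) :=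
            ENNReal.ofReal_le_ofReal (hsum3.trans h2x3)
    have hμb : M.μ {ω | 0 < M.cycleCount ω} ≤ ENNReal.ofReal (2 * x ^ 2) := by
      refine (measure_mono hsub).trans ((measure_union_le _ _).trans ?_)
      calc M.μ (⋃ pr : Fin (NB n) × Fin (NB n), {ω | P2 pr ω})
            + M.μ (⋃ m ∈ Finset.Icc 3 (NB n), ⋃ σ : ZMod m ↪ Fin (NB n),
              {ω | ∀ i : ZMod m, ∃ u ∈ F n (σ i), ∃ w ∈ F n (σ (i + 1)),
                M.edge u w ω = true})
          ≤ ENNReal.ofReal (x ^ 2) + ENNReal.ofReal (x ^ 2) := add_le_add hu1 hu2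
        _ = ENNReal.ofReal (2 * x ^ 2) := by
            rw [← ENNReal.ofReal_add (by positivity) (by positivity)]
            congr 1; ring
    exact lt_of_le_of_lt (ENNReal.toReal_le_of_le_ofReal (by positivity) hμb) hx2ε

end
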